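/- Let s be irrational in (0,1) with convergent denominators qₘ and suppose for some m ≥ 1 that ζ_{m+1} ≥ ⌈1/ε⌉ for some ε > 0. Then there exist integers p, q with 1 ≤ q ≤ qₘ and |q·s − p| ≤ ε. Consequently, for the IFS Φ_{s,t} with any irrational t, if 2ⁿ − 1 ≥ qₘ then Δₙ ≤ ε/2ⁿ ≤ ε. -/
import Mathlib


open scoped BigOperators

noncomputable def phiST (s t : ℝ) (i : Fin 6) (x : ℝ) : ℝ :=
  (x + ![0, 1, s, 1 + s, t, 1 + t] i) / 2

noncomputable def compST (s t : ℝ) (l : List (Fin 6)) : ℝ → ℝ :=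
  l.foldr (fun i g => phiST s t i ∘ g) id

noncomputable def DeltaST (s t : ℝ) (n : ℕ) : ℝ :=
  sInf {r : ℝ | ∃ a b : List (Fin 6), a.length = n ∧ b.length = n ∧ a ≠ b ∧
    r = |compST s t a 0 - compST s t b 0|}

/-- Encoding of `p` in binary with digits among `{0,1}` (offsets 0 and 1). -/
def wEncA : ℕ → ℕ → List (Fin 6)
  | 0, _ => []
  | n+1, p => (if p.testBit n then (1 : Fin 6) else 0) :: wEncA n p

/-- Encoding of `q` in binary with digits among `{0,2}` (offsets 0 and s). -/
def wEncB : ℕ → ℕ → List (Fin 6)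
  | 0, _ => []
  | n+1, q => (if q.testBit n then (2 : Fin 6) else 0) :: wEncB n q

lemma compST_cons (s t : ℝ) (i : Fin 6) (l : List (Fin 6)) (x : ℝ) :
    compST s t (i :: l) x = phiST s t i (compST s t l x) := rfl

lemma compST_nil (s t : ℝ) (x : ℝ) : compST s t [] x = x := rfl

lemma wEncA_length (n p : ℕ) : (wEncA n p).length = n := by
  induction n with
  | zero => rfl
  | succ n ih => simp [wEncA, ih]

lemma wEncB_length (n q : ℕ) : (wEncB n q).length = n := by
  induction n with
  | zero => rfl
  | succ n ih => simp [wEncB, ih]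

lemma two_notMem_wEncA (n p : ℕ) : (2 : Fin 6) ∉ wEncA n p := by
  induction n with
  | zero => simp [wEncA]
  | succ n ih =>
    simp only [wEncA, List.mem_cons]
    rintro (h | h)
    · split_ifs at h <;> exact absurd h.symm (by decide)
    · exact ih h

lemma two_mem_wEncB (n q : ℕ) (h : q % 2 ^ n ≠ 0) : (2 : Fin 6) ∈ wEncB n q := by
  induction n with
  | zero => exact absurd (Nat.mod_one q) h
  | succ n ih =>
    by_cases hb : q.testBit n
    · simp [wEncB, hb]
    · have hb' : q / 2 ^ n % 2 = 0 := by
        simp [Nat.testBit_eq_decide_div_mod_eq] at hb; omega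
      have hmod : q % 2 ^ (n + 1) = q % 2 ^ n + 2 ^ n * (q / 2 ^ n % 2) := by
        rw [pow_succ]; exact Nat.mod_mul
      rw [hmod, hb'] at h
      simp only [Nat.mul_zero, Nat.add_zero] at h
      simp [wEncB, hb, ih h]

lemma compST_wEncA (s t : ℝ) (n p : ℕ) :
    compST s t (wEncA n p) 0 = ((p % 2 ^ n : ℕ) : ℝ) / 2 ^ n := by
  induction n with
  | zero => simp [wEncA, compST_nil, Nat.mod_one]
  | succ n ih =>
    have hmod : p % 2 ^ (n + 1) = p % 2 ^ n + 2 ^ n * (p / 2 ^ n % 2) := by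
      rw [pow_succ]; exact Nat.mod_mul
    rw [wEncA, compST_cons, ih, hmod]
    by_cases hb : p.testBit n
    · have h1 : p / 2 ^ n % 2 = 1 := by simpa [Nat.testBit_eq_decide_div_mod_eq] using hb
      rw [h1, if_pos hb]
      show (((p % 2 ^ n : ℕ) : ℝ) / 2 ^ n + 1) / 2 = _
      push_cast
      rw [pow_succ]
      have h2 : (2 : ℝ) ^ n ≠ 0 := by positivity
      field_simp
      try ring
    · have h1 : p / 2 ^ n % 2 = 0 := by simp [Nat.testBit_eq_decide_div_mod_eq] at hb; omega
      rw [h1, if_neg hb]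
      show (((p % 2 ^ n : ℕ) : ℝ) / 2 ^ n + 0) / 2 = _
      push_cast
      rw [pow_succ]
      have h2 : (2 : ℝ) ^ n ≠ 0 := by positivity
      field_simp

lemma compST_wEncB (s t : ℝ) (n q : ℕ) :
    compST s t (wEncB n q) 0 = s * ((q % 2 ^ n : ℕ) : ℝ) / 2 ^ n := by
  induction n with
  | zero => simp [wEncB, compST_nil, Nat.mod_one]
  | succ n ih =>
    have hmod : q % 2 ^ (n + 1) = q % 2 ^ n + 2 ^ n * (q / 2 ^ n % 2) := by
      rw [pow_succ]; exact Nat.mod_mul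
    rw [wEncB, compST_cons, ih, hmod]
    by_cases hb : q.testBit n
    · have h1 : q / 2 ^ n % 2 = 1 := by simpa [Nat.testBit_eq_decide_div_mod_eq] using hb
      rw [h1, if_pos hb]
      show (s * ((q % 2 ^ n : ℕ) : ℝ) / 2 ^ n + s) / 2 = _
      push_cast
      rw [pow_succ]
      have h2 : (2 : ℝ) ^ n ≠ 0 := by positivity
      field_simp
      try ring
    · have h1 : q / 2 ^ n % 2 = 0 := by simp [Nat.testBit_eq_decide_div_mod_eq] at hb; omega
      rw [h1, if_neg hb]
      show (s * ((q % 2 ^ n : ℕ) : ℝ) / 2 ^ n + 0) / 2 = _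
      push_cast
      rw [pow_succ]
      have h2 : (2 : ℝ) ^ n ≠ 0 := by positivity
      field_simp
      try ring

/-- The integer denominator sequence built from the partial quotients. -/
def Dseq (ζ : ℕ → ℕ) : ℕ → ℕ
  | 0 => 1
  | 1 => ζ 1
  | (n+2) => ζ (n+2) * Dseq ζ (n+1) + Dseq ζ n

/-- If we can realize `|q·s - p| ≤ ε` with `0 ≤ p < 2^n` and `1 ≤ q < 2^n`, then
`DeltaST s t n ≤ ε / 2^n`. -/
lemma DeltaST_le_of_good (s t : ℝ) (n : ℕ) (ε : ℝ) (P Q : ℕ)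
    (hP : P < 2 ^ n) (hQ : Q < 2 ^ n) (hQ1 : 1 ≤ Q)
    (happrox : |(Q : ℝ) * s - (P : ℝ)| ≤ ε) :
    DeltaST s t n ≤ ε / 2 ^ n := by
  have hbdd : BddBelow {r : ℝ | ∃ a b : List (Fin 6), a.length = n ∧ b.length = n ∧ a ≠ b ∧
      r = |compST s t a 0 - compST s t b 0|} := by
    refine ⟨0, ?_⟩
    rintro r ⟨a, b, -, -, -, rfl⟩
    exact abs_nonneg _
  have hPmod : P % 2 ^ n = P := Nat.mod_eq_of_lt hP
  have hQmod : Q % 2 ^ n = Q := Nat.mod_eq_of_lt hQ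
  have hne : wEncA n P ≠ wEncB n Q := by
    intro h
    have h2 : (2 : Fin 6) ∈ wEncB n Q := by
      apply two_mem_wEncB
      rw [hQmod]; omega
    rw [← h] at h2
    exact two_notMem_wEncA n P h2
  have hmem : |compST s t (wEncA n P) 0 - compST s t (wEncB n Q) 0| ∈
      {r : ℝ | ∃ a b : List (Fin 6), a.length = n ∧ b.length = n ∧ a ≠ b ∧
      r = |compST s t a 0 - compST s t b 0|} :=
    ⟨wEncA n P, wEncB n Q, wEncA_length n P, wEncB_length n Q, hne, rfl⟩
  refine le_trans (csInf_le hbdd hmem) ?_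
  rw [compST_wEncA, compST_wEncB, hPmod, hQmod]
  have h2 : (0 : ℝ) < 2 ^ n := by positivity
  rw [div_sub_div_same, abs_div, abs_of_pos h2]
  gcongr
  rw [abs_sub_comm]
  calc |s * (Q : ℝ) - (P : ℝ)| = |(Q : ℝ) * s - (P : ℝ)| := by rw [mul_comm]
    _ ≤ ε := happrox

theorem stmt17 (s : ℝ) (hs : Irrational s) (hs1 : s ∈ Set.Ioo (0:ℝ) 1)
    (ζ : ℕ → ℕ) (hζpos : ∀ m, 0 < ζ m)
    (hζ1 : (GenContFract.of s).dens 1 = ζ 1)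
    (hrec : ∀ m : ℕ, (GenContFract.of s).dens (m + 2) =
      ζ (m + 2) * (GenContFract.of s).dens (m + 1) + (GenContFract.of s).dens m)
    (m : ℕ) (hm : 1 ≤ m) (ε : ℝ) (hε : 0 < ε)
    (hbig : (⌈1 / ε⌉ : ℝ) ≤ ζ (m + 1)) :
    (∃ p q : ℤ, 1 ≤ q ∧ (q : ℝ) ≤ (GenContFract.of s).dens m ∧ |(q : ℝ) * s - p| ≤ ε) ∧
    (∀ t : ℝ, Irrational t → ∀ n : ℕ, 1 ≤ n →
      (GenContFract.of s).dens m ≤ 2 ^ n - 1 →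
      DeltaST s t n ≤ ε / 2 ^ n ∧ ε / 2 ^ n ≤ ε) := by
  obtain ⟨hs0, hs1'⟩ := hs1
  set g := GenContFract.of s with hg
  -- the continued fraction of an irrational never terminates
  have hnt : ∀ k, ¬g.TerminatedAt k := by
    intro k hk
    obtain ⟨r, hr⟩ := (GenContFract.terminates_iff_rat s).mp ⟨k, hk⟩
    exact hs ⟨r, hr.symm⟩
  have hsome : ∀ k, ∃ gp, g.s.get? k = some gp := by
    intro k
    exact Option.ne_none_iff_exists'.mp (hnt k)
  -- numerators are integers
  have hnum : ∀ k, (∃ z : ℤ, g.nums k = (z : ℝ)) ∧ ∃ z : ℤ, g.nums (k+1) = (z : ℝ) := by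
    intro k
    induction k with
    | zero =>
      constructor
      · exact ⟨⌊s⌋, by rw [GenContFract.zeroth_num_eq_h, GenContFract.of_h_eq_floor]⟩
      · obtain ⟨gp, hgp⟩ := hsome 0
        obtain ⟨z, hz⟩ := GenContFract.exists_int_eq_of_partDen (GenContFract.partDen_eq_s_b hgp)
        have ha : gp.a = 1 := GenContFract.of_partNum_eq_one (GenContFract.partNum_eq_s_a hgp)
        refine ⟨z * ⌊s⌋ + 1, ?_⟩
        rw [GenContFract.first_num_eq hgp, ha, hz, GenContFract.of_h_eq_floor]
        push_cast; ring
    | succ k ih =>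
      refine ⟨ih.2, ?_⟩
      obtain ⟨z1, hz1⟩ := ih.1
      obtain ⟨z2, hz2⟩ := ih.2
      obtain ⟨gp, hgp⟩ := hsome (k + 1)
      obtain ⟨z, hz⟩ := GenContFract.exists_int_eq_of_partDen (GenContFract.partDen_eq_s_b hgp)
      have ha : gp.a = 1 := GenContFract.of_partNum_eq_one (GenContFract.partNum_eq_s_a hgp)
      refine ⟨z * z2 + z1, ?_⟩
      rw [GenContFract.nums_recurrence hgp hz1 hz2, ha, hz]
      push_cast; ring
  -- denominators equal the `Dseq` naturals
  have hden : ∀ k, g.dens k = ((Dseq ζ k : ℕ) : ℝ) ∧ g.dens (k+1) = ((Dseq ζ (k+1) : ℕ) : ℝ) := by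
    intro k
    induction k with
    | zero =>
      refine ⟨?_, ?_⟩
      · rw [GenContFract.zeroth_den_eq_one]; simp [Dseq]
      · rw [hζ1]; simp [Dseq]
    | succ k ih =>
      refine ⟨ih.2, ?_⟩
      rw [hrec k, ih.1, ih.2]
      have : Dseq ζ (k+2) = ζ (k+2) * Dseq ζ (k+1) + Dseq ζ k := rfl
      rw [this]
      push_cast; ring
  have hDpos : ∀ k, 0 < Dseq ζ k := by
    intro k
    induction k using Nat.strong_induction_on with
    | _ k ih =>
      match k with
      | 0 => exact Nat.one_pos
      | 1 => exact hζpos 1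
      | (k+2) =>
        have h1 := ih (k+1) (by omega)
        have h2 := hζpos (k+2)
        have : Dseq ζ (k+2) = ζ (k+2) * Dseq ζ (k+1) + Dseq ζ k := rfl
        rw [this]
        positivity
  -- the key approximation
  obtain ⟨p, hp⟩ := (hnum m).1
  set Q : ℕ := Dseq ζ m with hQ
  have hdm : g.dens m = (Q : ℝ) := (hden m).1
  have hQpos : 0 < Q := hDpos m
  have hdmpos : (0 : ℝ) < (Q : ℝ) := by exact_mod_cast hQpos
  -- dens (m+1) ≥ ζ (m+1)
  have hdm1 : g.dens (m+1) = ((Dseq ζ (m+1) : ℕ) : ℝ) := (hden m).2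
  have hD1ge : (ζ (m+1) : ℝ) ≤ g.dens (m+1) := by
    obtain ⟨k, rfl⟩ : ∃ k, m = k + 1 := ⟨m - 1, by omega⟩
    rw [hdm1]
    have h1 : Dseq ζ (k+2) = ζ (k+2) * Dseq ζ (k+1) + Dseq ζ k := rfl
    have h2 := hDpos (k+1)
    have h3 : ζ (k+2) ≤ Dseq ζ (k+2) := by
      rw [h1]
      calc ζ (k+2) = ζ (k+2) * 1 := (mul_one _).symm
        _ ≤ ζ (k+2) * Dseq ζ (k+1) := Nat.mul_le_mul_left _ h2
        _ ≤ _ := Nat.le_add_right _ _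
    exact_mod_cast h3
  have hζR : (0 : ℝ) < (ζ (m+1) : ℝ) := by exact_mod_cast hζpos (m+1)
  have hεinv : 1 / ε ≤ (ζ (m+1) : ℝ) := le_trans (Int.le_ceil _) hbig
  have hζε : 1 / (ζ (m+1) : ℝ) ≤ ε := by
    rw [div_le_iff₀ hζR]
    rw [div_le_iff₀ hε] at hεinv
    nlinarith
  have hdm1pos : (0 : ℝ) < g.dens (m+1) := lt_of_lt_of_le hζR hD1ge
  have key : |(Q : ℝ) * s - (p : ℝ)| ≤ ε := by
    have habs := GenContFract.abs_sub_convs_le (hnt m)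
    rw [GenContFract.conv_eq_num_div_den, hp, hdm] at habs
    have habs' : |s - (p : ℝ) / (Q : ℝ)| ≤ 1 / ((Q : ℝ) * g.dens (m+1)) := by
      rw [← hg] at habs; exact habs
    have hfac : (Q : ℝ) * s - (p : ℝ) = (Q : ℝ) * (s - (p : ℝ) / (Q : ℝ)) := by
      field_simp
      try ring
    rw [hfac, abs_mul, abs_of_pos hdmpos]
    have h4 : (Q : ℝ) * |s - (p : ℝ) / (Q : ℝ)| ≤ (Q : ℝ) * (1 / ((Q : ℝ) * g.dens (m+1))) :=
      mul_le_mul_of_nonneg_left habs' hdmpos.le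
    have heq : (Q : ℝ) * (1 / ((Q : ℝ) * g.dens (m+1))) = 1 / g.dens (m+1) := by
      field_simp
    have h5 : 1 / g.dens (m+1) ≤ 1 / (ζ (m+1) : ℝ) :=
      one_div_le_one_div_of_le hζR hD1ge
    calc (Q : ℝ) * |s - (p : ℝ) / (Q : ℝ)| ≤ 1 / g.dens (m+1) := by rw [← heq]; exact h4
      _ ≤ 1 / (ζ (m+1) : ℝ) := h5
      _ ≤ ε := hζε
  refine ⟨⟨p, (Q : ℤ), by exact_mod_cast hQpos, by rw [hdm]; push_cast; exact le_rfl, by exact_mod_cast key⟩, ?_⟩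
  intro t ht n hn hdens
  have h2n : (1 : ℝ) ≤ 2 ^ n := one_le_pow₀ (by norm_num : (1:ℝ) ≤ 2)
  refine ⟨?_, div_le_self hε.le h2n⟩
  rw [hdm] at hdens
  have hQlt : Q < 2 ^ n := by
    have h1 : (Q : ℝ) < 2 ^ n := by linarith
    exact_mod_cast h1
  by_cases hε1 : ε < 1
  · -- use p, Q from part 1; show 0 ≤ p ≤ Q
    have hQs0 : (0 : ℝ) < (Q : ℝ) * s := mul_pos hdmpos hs0
    have hQsQ : (Q : ℝ) * s < (Q : ℝ) := by nlinarith
    have hkey' := abs_le.mp key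
    have hp0 : 0 ≤ p := by
      have h1 : (-1 : ℝ) < (p : ℝ) := by linarith [hkey'.2]
      have h2 : (-1 : ℤ) < p := by exact_mod_cast h1
      omega
    have hpQ : p ≤ (Q : ℤ) := by
      have h1 : (p : ℝ) < (Q : ℝ) + 1 := by linarith [hkey'.1]
      have h2 : p < (Q : ℤ) + 1 := by exact_mod_cast h1
      omega
    set P : ℕ := p.toNat with hP
    have hpP : (P : ℤ) = p := Int.toNat_of_nonneg hp0
    have hPlt : P < 2 ^ n := by
      have h1 : (P : ℤ) ≤ (Q : ℤ) := by rw [hpP]; exact hpQ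
      have hQn : (Q : ℤ) < 2 ^ n := by exact_mod_cast hQlt
      have h3 : (P : ℤ) < 2 ^ n := lt_of_le_of_lt h1 hQn
      exact_mod_cast h3
    apply DeltaST_le_of_good s t n ε P Q hPlt hQlt hQpos
    have hcast : ((P : ℕ) : ℝ) = (p : ℝ) := by
      rw [← hpP]; push_cast; ring
    rw [hcast]
    exact key
  · -- ε ≥ 1 : use P = 0, Q = 1
    push_neg at hε1
    have h2n' : 1 < 2 ^ n := Nat.one_lt_two_pow_iff.mpr (by omega)
    apply DeltaST_le_of_good s t n ε 0 1 (by positivity) h2n' le_rfl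
    simp only [Nat.cast_one, Nat.cast_zero, one_mul, sub_zero]
    rw [abs_of_pos hs0]
    linarith
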